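/- Fix integers n ≥ 1, m ≥ 1 and constants 0 ≤ δ̄ < ḡ. Let a_1,…,a_n ∈ ℝ^m be unit vectors and b_1,…,b_n ∈ ℝ. If min_j b_j ≥ 0, then u = 0 satisfies ⟨a_j, u⟩ + (δ̄/ḡ)·‖u‖ ≤ b_j for all j. If instead b_k = min_j b_j < 0 and b_j ≥ −((ḡ+δ̄)/(ḡ−δ̄))·b_k for every j, then the vector u* = (ḡ·b_k/(ḡ−δ̄))·a_k satisfies ⟨a_j, u*⟩ + (δ̄/ḡ)·‖u*‖ ≤ b_j for all j = 1,…,n; in particular the set { u ∈ ℝ^m : ⟨a_j, u⟩ + (δ̄/ḡ)·‖u‖ ≤ b_j for all j } is nonempty. -/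

import Mathlib

open scoped RealInnerProductSpace

/-- The explicit feasibility witness (equations (31), (34), (38)) in the proof of
Theorem 1, Property 1 of the paper. -/
theorem stmt1 (n m : ℕ) (hn : 1 ≤ n) (hm : 1 ≤ m)
    (gbar δbar : ℝ) (hδ0 : 0 ≤ δbar) (hδg : δbar < gbar)
    (a : Fin n → EuclideanSpace ℝ (Fin m)) (ha : ∀ j, ‖a j‖ = 1)
    (b : Fin n → ℝ) :
    ((∀ j, 0 ≤ b j) →
      ∀ j, ⟪a j, (0 : EuclideanSpace ℝ (Fin m))⟫
          + δbar / gbar * ‖(0 : EuclideanSpace ℝ (Fin m))‖ ≤ b j) ∧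
    (∀ k, (∀ j, b k ≤ b j) → b k < 0 →
      (∀ j, -((gbar + δbar) / (gbar - δbar)) * b k ≤ b j) →
      ((∀ j, ⟪a j, (gbar * b k / (gbar - δbar)) • a k⟫
          + δbar / gbar * ‖(gbar * b k / (gbar - δbar)) • a k‖ ≤ b j) ∧
        ∃ u : EuclideanSpace ℝ (Fin m),
          ∀ j, ⟪a j, u⟫ + δbar / gbar * ‖u‖ ≤ b j)) := by
  have hg : (0:ℝ) < gbar := lt_of_le_of_lt hδ0 hδg
  constructor
  · intro hb j
    simp [inner_zero_right]
    exact hb j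
  · intro k hmin hneg hbig
    have hgd : (0:ℝ) < gbar - δbar := by linarith
    set c : ℝ := gbar * b k / (gbar - δbar) with hc
    have hcneg : c < 0 := div_neg_of_neg_of_pos (mul_neg_of_pos_of_neg hg hneg) hgd
    have hmain : ∀ j, ⟪a j, c • a k⟫ + δbar / gbar * ‖c • a k‖ ≤ b j := by
      intro j
      have hnorm : ‖c • a k‖ = -c := by
        rw [norm_smul, ha k, mul_one, Real.norm_eq_abs, abs_of_neg hcneg]
      have hinner : ⟪a j, c • a k⟫ = c * ⟪a j, a k⟫ := real_inner_smul_right _ _ _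
      have hcs : |⟪a j, a k⟫| ≤ 1 := by
        have := abs_real_inner_le_norm (a j) (a k)
        simpa [ha j, ha k] using this
      have h1 : c * ⟪a j, a k⟫ ≤ -c := by
        have : -(⟪a j, a k⟫) ≤ 1 := (abs_le.mp hcs).1 |> neg_le.mp |> fun h => by
          have := (abs_le.mp hcs).1; linarith
        nlinarith [(abs_le.mp hcs).1, (abs_le.mp hcs).2]
      have key : -c + δbar / gbar * (-c) = -((gbar + δbar) / (gbar - δbar)) * b k := by
        field_simp [hc]
        rw [hc]
        field_simp
        ring
      calc ⟪a j, c • a k⟫ + δbar / gbar * ‖c • a k‖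
          ≤ -c + δbar / gbar * (-c) := by
            rw [hinner, hnorm]
            have : 0 ≤ δbar / gbar := div_nonneg hδ0 hg.le
            linarith
        _ = -((gbar + δbar) / (gbar - δbar)) * b k := key
        _ ≤ b j := hbig j
    exact ⟨hmain, ⟨c • a k, hmain⟩⟩
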